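/- Let A be a nonzero polynomial in F_2[x] with deg(A) ≥ 1, and let m be the least nonnegative integer such that A_{2m+1} = 1. Then m + 1 ≤ 2^{deg(A) - 1}. -/
import Mathlib

open Polynomial Finset

/-- The polynomial `M = x^2 + x + 1` over `F_2`. -/
noncomputable def M : Polynomial (ZMod 2) := X ^ 2 + X + 1

/-- The odd part of a binary polynomial: `P` divided by `x^{val_x(P)} (x+1)^{val_{x+1}(P)}`. -/
noncomputable def oddPart (P : Polynomial (ZMod 2)) : Polynomial (ZMod 2) :=
  P / (X ^ P.rootMultiplicity 0 * (X + 1) ^ P.rootMultiplicity 1)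

/-- The Collatz sequence of a binary polynomial `A`:
`A_0 = A`, `A_{2k+1} = oddPart A_{2k}`, `A_{2k+2} = 1 + M * A_{2k+1}`. -/
noncomputable def collatz (A : Polynomial (ZMod 2)) : ℕ → Polynomial (ZMod 2)
  | 0 => A
  | n + 1 => if n % 2 = 0 then oddPart (collatz A n) else 1 + M * collatz A n

/-- `a_k`: the multiplicity of `x` in `A_k`. -/
noncomputable def aSeq (A : Polynomial (ZMod 2)) (k : ℕ) : ℕ :=
  (collatz A k).rootMultiplicity 0

/-- `b_k`: the multiplicity of `x + 1` in `A_k`. -/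
noncomputable def bSeq (A : Polynomial (ZMod 2)) (k : ℕ) : ℕ :=
  (collatz A k).rootMultiplicity 1

/-- The length `ℓ_A = m + 1`, where `m` is the least nonnegative integer
with `A_{2m+1} = 1`. -/
noncomputable def collatzLength (A : Polynomial (ZMod 2)) : ℕ :=
  sInf {m : ℕ | collatz A (2 * m + 1) = 1} + 1

/- ### Auxiliary lemmas -/

lemma CollatzAux.two_eq_zero : (2 : Polynomial (ZMod 2)) = 0 := by
  have h : (2 : Polynomial (ZMod 2)) = C (2 : ZMod 2) := by rw [map_ofNat]
  rw [h, show (2 : ZMod 2) = 0 by decide, map_zero]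

lemma CollatzAux.cop : IsCoprime (X : Polynomial (ZMod 2)) (X + 1) :=
  ⟨1, 1, by linear_combination X * CollatzAux.two_eq_zero⟩

lemma CollatzAux.xsub : (X + 1 : Polynomial (ZMod 2)) = X - C 1 := by
  simp only [C_1]; linear_combination CollatzAux.two_eq_zero

lemma CollatzAux.X_add_one_ne_zero : (X + 1 : Polynomial (ZMod 2)) ≠ 0 := by
  rw [CollatzAux.xsub]; exact X_sub_C_ne_zero 1

lemma CollatzAux.oddPart_mul (P : Polynomial (ZMod 2)) (hP : P ≠ 0) :
    X ^ P.rootMultiplicity 0 * (X + 1) ^ P.rootMultiplicity 1 * oddPart P = P := by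
  apply EuclideanDomain.mul_div_cancel'
  · exact mul_ne_zero (pow_ne_zero _ X_ne_zero) (pow_ne_zero _ CollatzAux.X_add_one_ne_zero)
  · have h0 : (X : Polynomial (ZMod 2)) ^ P.rootMultiplicity 0 ∣ P := by
      simpa using P.pow_rootMultiplicity_dvd 0
    have h1 : (X + 1 : Polynomial (ZMod 2)) ^ P.rootMultiplicity 1 ∣ P := by
      rw [CollatzAux.xsub]; exact P.pow_rootMultiplicity_dvd 1
    exact (CollatzAux.cop.pow).mul_dvd h0 h1

lemma CollatzAux.oddPart_ne_zero (P : Polynomial (ZMod 2)) (hP : P ≠ 0) : oddPart P ≠ 0 := by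
  intro h
  apply hP
  rw [← CollatzAux.oddPart_mul P hP, h, mul_zero]

lemma CollatzAux.zmod2_ne_zero {x : ZMod 2} (h : x ≠ 0) : x = 1 := by revert x; decide

lemma CollatzAux.oddPart_eval0 (P : Polynomial (ZMod 2)) (hP : P ≠ 0) : (oddPart P).eval 0 = 1 := by
  apply CollatzAux.zmod2_ne_zero
  intro h
  have hdvd : (X : Polynomial (ZMod 2)) ∣ oddPart P := by
    simpa using (dvd_iff_isRoot (p := oddPart P) (a := 0)).2 h
  apply P.pow_rootMultiplicity_not_dvd hP 0
  have : (X : Polynomial (ZMod 2)) ^ (P.rootMultiplicity 0 + 1) ∣ P := by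
    conv_rhs => rw [← CollatzAux.oddPart_mul P hP]
    rw [pow_succ]
    exact mul_dvd_mul (dvd_mul_right _ _) hdvd
  simpa using this

lemma CollatzAux.oddPart_eval1 (P : Polynomial (ZMod 2)) (hP : P ≠ 0) : (oddPart P).eval 1 = 1 := by
  apply CollatzAux.zmod2_ne_zero
  intro h
  have hdvd : (X + 1 : Polynomial (ZMod 2)) ∣ oddPart P := by
    rw [CollatzAux.xsub]; exact (dvd_iff_isRoot (p := oddPart P) (a := 1)).2 h
  apply P.pow_rootMultiplicity_not_dvd hP 1
  rw [← CollatzAux.xsub, pow_succ]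
  conv_rhs => rw [← CollatzAux.oddPart_mul P hP]
  exact mul_dvd_mul (dvd_mul_left _ _) hdvd

lemma CollatzAux.oddPart_natDegree (P : Polynomial (ZMod 2)) (hP : P ≠ 0) :
    (oddPart P).natDegree = P.natDegree - P.rootMultiplicity 0 - P.rootMultiplicity 1 := by
  have h := CollatzAux.oddPart_mul P hP
  have hd : P.natDegree
      = P.rootMultiplicity 0 + P.rootMultiplicity 1 + (oddPart P).natDegree := by
    conv_lhs => rw [← h]
    rw [natDegree_mul (mul_ne_zero (pow_ne_zero _ X_ne_zero)
          (pow_ne_zero _ CollatzAux.X_add_one_ne_zero)) (CollatzAux.oddPart_ne_zero P hP),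
        natDegree_mul (pow_ne_zero _ X_ne_zero) (pow_ne_zero _ CollatzAux.X_add_one_ne_zero)]
    simp [natDegree_pow, CollatzAux.xsub,
      show ((X : Polynomial (ZMod 2)) - 1).natDegree = 1 from by
        simpa using natDegree_X_sub_C (1 : ZMod 2)]
  omega

lemma CollatzAux.M_natDegree : (M : Polynomial (ZMod 2)).natDegree = 2 := by
  unfold M; compute_degree!

lemma CollatzAux.M_ne_zero : (M : Polynomial (ZMod 2)) ≠ 0 := by
  intro h
  have := CollatzAux.M_natDegree
  rw [h] at this
  simp at this

lemma CollatzAux.M_eval0 : (M : Polynomial (ZMod 2)).eval 0 = 1 := by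
  simp [M]

lemma CollatzAux.M_eval1 : (M : Polynomial (ZMod 2)).eval 1 = 1 := by
  simp [M]; decide

lemma CollatzAux.collatz_even (A : Polynomial (ZMod 2)) (t : ℕ) :
    collatz A (2 * t + 2) = 1 + M * collatz A (2 * t + 1) := by
  show collatz A (2 * t + 1 + 1) = _
  rw [collatz, if_neg (by omega)]

lemma CollatzAux.collatz_odd (A : Polynomial (ZMod 2)) (t : ℕ) :
    collatz A (2 * t + 3) = oddPart (collatz A (2 * t + 2)) := by
  show collatz A (2 * t + 2 + 1) = _
  rw [collatz, if_pos (by omega)]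

lemma CollatzAux.collatz_step (A : Polynomial (ZMod 2)) (t : ℕ) :
    collatz A (2 * t + 3) = oddPart (1 + M * collatz A (2 * t + 1)) := by
  rw [CollatzAux.collatz_odd, CollatzAux.collatz_even]

/-- main invariant: each `A_{2k+1}` is nonzero, odd, of degree `≤ deg A`. -/
lemma CollatzAux.collatz_inv (A : Polynomial (ZMod 2)) (hA : A ≠ 0) (k : ℕ) :
    collatz A (2 * k + 1) ≠ 0 ∧ (collatz A (2 * k + 1)).eval 0 = 1 ∧
      (collatz A (2 * k + 1)).eval 1 = 1 ∧ (collatz A (2 * k + 1)).natDegree ≤ A.natDegree := by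
  induction k with
  | zero =>
    have h1 : collatz A (2 * 0 + 1) = oddPart A := by
      show collatz A (0 + 1) = _
      rw [collatz, if_pos (by omega)]
      rfl
    rw [h1]
    refine ⟨CollatzAux.oddPart_ne_zero A hA, CollatzAux.oddPart_eval0 A hA,
      CollatzAux.oddPart_eval1 A hA, ?_⟩
    rw [CollatzAux.oddPart_natDegree A hA]
    omega
  | succ k ih =>
    obtain ⟨hB, hB0, hB1, hBd⟩ := ih
    set B := collatz A (2 * k + 1) with hBdef
    have hMB : M * B ≠ 0 := mul_ne_zero CollatzAux.M_ne_zero hB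
    have hMBd : (M * B).natDegree = B.natDegree + 2 := by
      rw [natDegree_mul CollatzAux.M_ne_zero hB, CollatzAux.M_natDegree]; omega
    have hCeq : collatz A (2 * k + 2) = 1 + M * B := CollatzAux.collatz_even A k
    set C := (1 : Polynomial (ZMod 2)) + M * B with hCdef
    have hCd : C.natDegree = B.natDegree + 2 := by
      rw [hCdef, natDegree_add_eq_right_of_natDegree_lt (by
        rw [hMBd]; simp), hMBd]
    have hC : C ≠ 0 := by
      intro h
      rw [h] at hCd
      simp at hCd
    have hC0 : C.eval 0 = 0 := by
      rw [hCdef]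
      simp [CollatzAux.M_eval0, hB0]
      decide
    have hC1 : C.eval 1 = 0 := by
      rw [hCdef]
      simp [CollatzAux.M_eval1, hB1]
      decide
    have ha : 1 ≤ C.rootMultiplicity 0 := (rootMultiplicity_pos hC).2 hC0
    have hb : 1 ≤ C.rootMultiplicity 1 := (rootMultiplicity_pos hC).2 hC1
    have hD : collatz A (2 * (k + 1) + 1) = oddPart C := by
      rw [show 2 * (k + 1) + 1 = 2 * k + 3 by ring, CollatzAux.collatz_odd, hCeq]
    rw [hD]
    refine ⟨CollatzAux.oddPart_ne_zero C hC, CollatzAux.oddPart_eval0 C hC,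
      CollatzAux.oddPart_eval1 C hC, ?_⟩
    rw [CollatzAux.oddPart_natDegree C hC]
    omega

theorem length_upper_bound (A : Polynomial (ZMod 2)) (hA : A ≠ 0)
    (hdeg : 1 ≤ A.natDegree) (m : ℕ)
    (hm : IsLeast {n : ℕ | collatz A (2 * n + 1) = 1} m) :
    m + 1 ≤ 2 ^ (A.natDegree - 1) := by
  obtain ⟨hm1, hm2⟩ := hm
  have hm1' : collatz A (2 * m + 1) = 1 := hm1
  -- periodicity shift
  have hshift : ∀ j k : ℕ, collatz A (2 * j + 1) = collatz A (2 * k + 1) →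
      ∀ i, collatz A (2 * (j + i) + 1) = collatz A (2 * (k + i) + 1) := by
    intro j k h i
    induction i with
    | zero => simpa using h
    | succ i ih =>
      rw [show 2 * (j + (i + 1)) + 1 = 2 * (j + i) + 3 by ring,
          show 2 * (k + (i + 1)) + 1 = 2 * (k + i) + 3 by ring,
          CollatzAux.collatz_step, CollatzAux.collatz_step, ih]
  have haux : ∀ j k : ℕ, j < k → k ≤ m →
      collatz A (2 * j + 1) = collatz A (2 * k + 1) → False := by
    intro j k hjk hkm heq
    have h := hshift j k heq (m - k)
    rw [show k + (m - k) = m by omega, hm1'] at h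
    have hle : m ≤ j + (m - k) := hm2 h
    omega
  have hinj : ∀ j k : ℕ, j ≤ m → k ≤ m →
      collatz A (2 * j + 1) = collatz A (2 * k + 1) → j = k := by
    intro j k hj hk heq
    rcases lt_trichotomy j k with h | h | h
    · exact absurd (haux j k h hk heq) (by simp)
    · exact h
    · exact absurd (haux k j h hj heq.symm) (by simp)
  obtain ⟨e, he⟩ : ∃ e, A.natDegree = e + 1 := ⟨A.natDegree - 1, by omega⟩
  set f : Fin (m + 1) → (Fin e → ZMod 2) :=
    fun k i => (collatz A (2 * (k : ℕ) + 1)).coeff ((i : ℕ) + 1) with hf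
  have hfinj : Function.Injective f := by
    intro j k hjk
    obtain ⟨hPne, hP0, hP1, hPd⟩ := CollatzAux.collatz_inv A hA (j : ℕ)
    obtain ⟨hQne, hQ0, hQ1, hQd⟩ := CollatzAux.collatz_inv A hA (k : ℕ)
    set P := collatz A (2 * (j : ℕ) + 1) with hP
    set Q := collatz A (2 * (k : ℕ) + 1) with hQ
    rw [he] at hPd hQd
    have hcoeff : ∀ n, 1 ≤ n → n ≤ e → P.coeff n = Q.coeff n := by
      intro n h1 h2
      have := congrFun hjk (⟨n - 1, by omega⟩ : Fin e)
      simp only [hf] at this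
      rw [show n - 1 + 1 = n by omega] at this
      exact this
    have hc0 : P.coeff 0 = Q.coeff 0 := by
      rw [coeff_zero_eq_eval_zero, coeff_zero_eq_eval_zero, hP0, hQ0]
    have hsum : ∀ R : Polynomial (ZMod 2), R.natDegree ≤ e + 1 → R.eval 1 = 1 →
        (∑ i ∈ Finset.range (e + 1), R.coeff i) + R.coeff (e + 1) = 1 := by
      intro R hRd hR1
      have := eval_eq_sum_range' (p := R) (n := e + 2) (by omega) 1
      rw [hR1] at this
      simp only [one_pow, mul_one] at this
      rw [Finset.sum_range_succ] at this
      exact this.symm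
    have hsums : (∑ i ∈ Finset.range (e + 1), P.coeff i)
        = ∑ i ∈ Finset.range (e + 1), Q.coeff i := by
      apply Finset.sum_congr rfl
      intro i hi
      simp only [Finset.mem_range] at hi
      rcases Nat.eq_zero_or_pos i with h | h
      · rw [h]; exact hc0
      · exact hcoeff i h (by omega)
    have hctop : P.coeff (e + 1) = Q.coeff (e + 1) := by
      have h1 := hsum P hPd hP1
      have h2 := hsum Q hQd hQ1
      rw [hsums] at h1
      rw [← h2] at h1
      exact add_left_cancel h1
    have hPQ : P = Q := by
      ext n
      rcases Nat.lt_or_ge n (e + 2) with h | h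
      · rcases Nat.eq_zero_or_pos n with h0 | h0
        · rw [h0]; exact hc0
        · rcases Nat.lt_or_ge n (e + 1) with h1 | h1
          · exact hcoeff n h0 (by omega)
          · rw [show n = e + 1 by omega]; exact hctop
      · rw [coeff_eq_zero_of_natDegree_lt (by omega),
            coeff_eq_zero_of_natDegree_lt (by omega)]
    exact Fin.ext (hinj (j : ℕ) (k : ℕ) (by omega) (by omega) (by rw [← hP, ← hQ, hPQ]))
  have hcard := Fintype.card_le_of_injective f hfinj
  simp only [Fintype.card_fin, Fintype.card_fun, ZMod.card] at hcard
  calc m + 1 ≤ 2 ^ e := hcard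
    _ = 2 ^ (A.natDegree - 1) := by rw [he]; norm_num
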